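/- Let (C,⊗,I,σ) be a symmetric monoidal category and Tr^U_{A,B} : C(A⊗U,B⊗U) ⇀ C(A,B) a family of partial functions satisfying the naturality axiom. Then Tr satisfies the strength axiom (g⊗Tr^U_{A,B}(f) ⊑ Tr^U_{C⊗A,D⊗B}(g⊗f) for all f : A⊗U → B⊗U and g : C → D) if and only if it satisfies the superposing axiom (Tr^U_{A,B}(f)⊗g ⊑ Tr^U_{A⊗C,B⊗D}((1_B⊗σ_{U,D})∘(f⊗g)∘(1_A⊗σ_{C,U})) for all f : A⊗U → B⊗U and g : C → D). -/

import Mathlib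

open CategoryTheory MonoidalCategory

universe v u

/-- Conjugating the "strength" morphism by braidings yields the "superposing" morphism. -/
lemma braid_conj (C : Type u) [Category.{v} C] [MonoidalCategory C] [SymmetricCategory C]
    {A B X Y U : C} (f : A ⊗ U ⟶ B ⊗ U) (g : X ⟶ Y) :
    ((β_ A X).hom ⊗ₘ 𝟙 U) ≫ ((α_ X A U).hom ≫ (g ⊗ₘ f) ≫ (α_ Y B U).inv) ≫ ((β_ Y B).hom ⊗ₘ 𝟙 U)
    = (α_ A X U).hom ≫ (𝟙 A ⊗ₘ (β_ X U).hom) ≫ (α_ A U X).inv ≫ (f ⊗ₘ g) ≫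
        (α_ B U Y).hom ≫ (𝟙 B ⊗ₘ (β_ U Y).hom) ≫ (α_ B Y U).inv := by
  have e1 : (β_ A X).hom ▷ U ≫ (α_ X A U).hom ≫ (β_ X (A ⊗ U)).hom
      = (α_ A X U).hom ≫ A ◁ (β_ X U).hom ≫ (α_ A U X).inv := by
    simp
    rw [← MonoidalCategory.comp_whiskerRight_assoc]
    simp
  have e2 : (β_ (B ⊗ U) Y).hom ≫ (α_ Y B U).inv ≫ (β_ Y B).hom ▷ U
      = (α_ B U Y).hom ≫ B ◁ (β_ U Y).hom ≫ (α_ B Y U).inv := by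
    simp
    rw [← MonoidalCategory.comp_whiskerRight]
    simp
  have h1 : (g ⊗ₘ f) = (β_ X (A ⊗ U)).hom ≫ (f ⊗ₘ g) ≫ (β_ (B ⊗ U) Y).hom := by
    rw [← cancel_mono (β_ Y (B ⊗ U)).hom, Category.assoc, Category.assoc,
      SymmetricCategory.symmetry, Category.comp_id, BraidedCategory.braiding_naturality]
  simp only [tensorHom_id, id_tensorHom]
  rw [h1]
  slice_lhs 1 3 => rw [e1]
  slice_lhs 5 7 => rw [e2]

/-- Conjugating a tensor of morphisms by braidings swaps the factors. -/
lemma braid_swap (C : Type u) [Category.{v} C] [MonoidalCategory C] [SymmetricCategory C]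
    {A B X Y : C} (v : A ⟶ B) (g : X ⟶ Y) :
    (β_ A X).hom ≫ (g ⊗ₘ v) ≫ (β_ Y B).hom = v ⊗ₘ g := by
  rw [← BraidedCategory.braiding_naturality_assoc, SymmetricCategory.symmetry, Category.comp_id]

/-- In the presence of the naturality axiom, a family of partial trace functions
(modelled via `Option`) satisfies the strength axiom if and only if it satisfies the
superposing axiom. -/
theorem strength_iff_superposing
    (C : Type u) [Category.{v} C] [MonoidalCategory C] [SymmetricCategory C]
    (tr : ∀ {A B U : C}, (A ⊗ U ⟶ B ⊗ U) → Option (A ⟶ B))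
    (nat : ∀ {A A' B B' U : C} (f : A ⊗ U ⟶ B ⊗ U) (g : A' ⟶ A) (h : B ⟶ B')
      (v : A ⟶ B), tr f = some v → tr ((g ⊗ₘ 𝟙 U) ≫ f ≫ (h ⊗ₘ 𝟙 U)) = some (g ≫ v ≫ h)) :
    -- strength
    (∀ {A B X Y U : C} (f : A ⊗ U ⟶ B ⊗ U) (g : X ⟶ Y) (v : A ⟶ B),
      tr f = some v →
        tr ((α_ X A U).hom ≫ (g ⊗ₘ f) ≫ (α_ Y B U).inv) = some (g ⊗ₘ v))
    ↔
    -- superposing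
    (∀ {A B X Y U : C} (f : A ⊗ U ⟶ B ⊗ U) (g : X ⟶ Y) (v : A ⟶ B),
      tr f = some v →
        tr ((α_ A X U).hom ≫ (𝟙 A ⊗ₘ (β_ X U).hom) ≫ (α_ A U X).inv ≫ (f ⊗ₘ g) ≫
            (α_ B U Y).hom ≫ (𝟙 B ⊗ₘ (β_ U Y).hom) ≫ (α_ B Y U).inv) = some (v ⊗ₘ g)) := by
  constructor
  · intro str A B X Y U f g v hv
    have h1 := nat _ (β_ A X).hom (β_ Y B).hom _ (str f g v hv)
    rw [braid_conj, braid_swap] at h1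
    exact h1
  · intro sup A B X Y U f g v hv
    have h1 := nat _ (β_ X A).hom (β_ B Y).hom _ (sup f g v hv)
    rw [← braid_conj] at h1
    -- simplify the conjugation on both the morphism and the value
    have e : ((β_ X A).hom ⊗ₘ 𝟙 U) ≫ (((β_ A X).hom ⊗ₘ 𝟙 U) ≫
          ((α_ X A U).hom ≫ (g ⊗ₘ f) ≫ (α_ Y B U).inv) ≫ ((β_ Y B).hom ⊗ₘ 𝟙 U)) ≫
          ((β_ B Y).hom ⊗ₘ 𝟙 U)
        = (α_ X A U).hom ≫ (g ⊗ₘ f) ≫ (α_ Y B U).inv := by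
      simp only [tensorHom_id, Category.assoc]
      rw [← MonoidalCategory.comp_whiskerRight_assoc, SymmetricCategory.symmetry]
      simp only [MonoidalCategory.id_whiskerRight, Category.id_comp, Category.assoc]
      rw [← MonoidalCategory.comp_whiskerRight, SymmetricCategory.symmetry]
      simp
    have ev : (β_ X A).hom ≫ (v ⊗ₘ g) ≫ (β_ B Y).hom = g ⊗ₘ v := braid_swap C g v
    rw [e, ev] at h1
    exact h1
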